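/- Let X be a finite set, let π and q* be probability mass functions on X, and fix a function N : X → ℕ (counts of symbols in an observed sequence). Suppose q̂ is a probability mass function on X such that q̂(x) depends only on N(x) (i.e., q̂ is a natural estimator), and define M̂_ζ = Σ_{x : N(x)=ζ} q̂(x) and M^π_ζ = Σ_{x : N(x)=ζ} π(x). If q* is also natural (q*(x) depends only on N(x)), then d_TV(π, q̂) ≤ 2·d_TV(π, q*) + d_TV(M̂, M^π), where d_TV between the vectors M̂ and M^π is half the ℓ1 distance of the sequences (M̂_ζ)_{ζ} and (M^π_ζ)_{ζ}, provided q̂ distributes M̂_ζ equally among symbols with N(x)=ζ. -/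
import Mathlib

open Finset

/-- Oracle inequality: if `qhat` is the natural estimator obtained by splitting its
count masses equally among symbols of equal count, and `qstar` is any natural
distribution, then `d_TV(π, qhat) ≤ 2 d_TV(π, qstar) + d_TV(M̂, M^π)`. -/
theorem stmt0 {X : Type*} [Fintype X] [DecidableEq X]
    (π qstar qhat : X → ℝ) (N : X → ℕ)
    (hπ0 : ∀ x, 0 ≤ π x) (hπ1 : ∑ x, π x = 1)
    (hqs0 : ∀ x, 0 ≤ qstar x) (hqs1 : ∑ x, qstar x = 1)
    (hqh0 : ∀ x, 0 ≤ qhat x) (hqh1 : ∑ x, qhat x = 1)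
    (hnat_star : ∀ x y, N x = N y → qstar x = qstar y)
    (hnat_hat : ∀ x y, N x = N y → qhat x = qhat y)
    (hsplit : ∀ x : X,
      qhat x = (∑ y ∈ univ.filter (fun y => N y = N x), qhat y) /
        ((univ.filter (fun y => N y = N x)).card : ℝ)) :
    (1/2) * ∑ x, |π x - qhat x| ≤
      2 * ((1/2) * ∑ x, |π x - qstar x|) +
      (1/2) * ∑ ζ ∈ Finset.image N univ,
        |(∑ x ∈ univ.filter (fun x => N x = ζ), qhat x) -
          (∑ x ∈ univ.filter (fun x => N x = ζ), π x)| := by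
  have key : ∀ ζ ∈ Finset.image N univ,
      ∑ x ∈ univ.filter (fun x => N x = ζ), |π x - qhat x| ≤
      2 * ∑ x ∈ univ.filter (fun x => N x = ζ), |π x - qstar x| +
      |(∑ x ∈ univ.filter (fun x => N x = ζ), qhat x) -
        (∑ x ∈ univ.filter (fun x => N x = ζ), π x)| := by
    intro ζ hζ
    set S := univ.filter (fun x => N x = ζ) with hS
    obtain ⟨x0, hx0⟩ := Finset.mem_image.1 hζ
    have hx0S : x0 ∈ S := by simp [hS, hx0.2]
    have hconst : ∀ x ∈ S, qstar x - qhat x = qstar x0 - qhat x0 := by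
      intro x hx
      simp only [hS, mem_filter, mem_univ, true_and] at hx
      rw [hnat_star x x0 (hx.trans hx0.2.symm), hnat_hat x x0 (hx.trans hx0.2.symm)]
    have h1 : ∑ x ∈ S, |π x - qhat x| ≤
        ∑ x ∈ S, |π x - qstar x| + ∑ x ∈ S, |qstar x - qhat x| := by
      rw [← Finset.sum_add_distrib]
      apply Finset.sum_le_sum
      intro x _
      calc |π x - qhat x| = |(π x - qstar x) + (qstar x - qhat x)| := by ring_nf
        _ ≤ |π x - qstar x| + |qstar x - qhat x| := abs_add_le _ _
    have h2 : ∑ x ∈ S, |qstar x - qhat x| = |∑ x ∈ S, (qstar x - qhat x)| := by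
      rw [Finset.sum_congr rfl (fun x hx => by rw [hconst x hx]),
          Finset.sum_congr rfl hconst, Finset.sum_const, Finset.sum_const,
          nsmul_eq_mul, nsmul_eq_mul, abs_mul, Nat.abs_cast]
    have h3 : |∑ x ∈ S, (qstar x - qhat x)| ≤
        ∑ x ∈ S, |π x - qstar x| +
        |(∑ x ∈ S, qhat x) - (∑ x ∈ S, π x)| := by
      have : ∑ x ∈ S, (qstar x - qhat x)
          = (∑ x ∈ S, (qstar x - π x)) + ((∑ x ∈ S, π x) - ∑ x ∈ S, qhat x) := by
        rw [Finset.sum_sub_distrib, Finset.sum_sub_distrib]; ring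
      rw [this]
      calc |(∑ x ∈ S, (qstar x - π x)) + ((∑ x ∈ S, π x) - ∑ x ∈ S, qhat x)|
          ≤ |∑ x ∈ S, (qstar x - π x)| + |(∑ x ∈ S, π x) - ∑ x ∈ S, qhat x| := abs_add_le _ _
        _ ≤ (∑ x ∈ S, |qstar x - π x|) + |(∑ x ∈ S, qhat x) - (∑ x ∈ S, π x)| :=
            add_le_add (Finset.abs_sum_le_sum_abs _ _) (le_of_eq (abs_sub_comm _ _))
        _ = (∑ x ∈ S, |π x - qstar x|) + |(∑ x ∈ S, qhat x) - (∑ x ∈ S, π x)| := by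
            rw [Finset.sum_congr rfl (fun x _ => abs_sub_comm _ _)]
    calc ∑ x ∈ S, |π x - qhat x|
        ≤ ∑ x ∈ S, |π x - qstar x| + ∑ x ∈ S, |qstar x - qhat x| := h1
      _ = ∑ x ∈ S, |π x - qstar x| + |∑ x ∈ S, (qstar x - qhat x)| := by rw [h2]
      _ ≤ ∑ x ∈ S, |π x - qstar x| + (∑ x ∈ S, |π x - qstar x| +
            |(∑ x ∈ S, qhat x) - (∑ x ∈ S, π x)|) := by linarith [h3]
      _ = 2 * ∑ x ∈ S, |π x - qstar x| +
            |(∑ x ∈ S, qhat x) - (∑ x ∈ S, π x)| := by ring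
  have hmaps : ∀ x ∈ (univ : Finset X), N x ∈ Finset.image N univ :=
    fun x _ => Finset.mem_image_of_mem N (mem_univ x)
  have hfib1 : ∑ ζ ∈ Finset.image N univ, ∑ x ∈ univ.filter (fun x => N x = ζ),
      |π x - qhat x| = ∑ x, |π x - qhat x| :=
    Finset.sum_fiberwise_of_maps_to hmaps _
  have hfib2 : ∑ ζ ∈ Finset.image N univ, ∑ x ∈ univ.filter (fun x => N x = ζ),
      |π x - qstar x| = ∑ x, |π x - qstar x| :=
    Finset.sum_fiberwise_of_maps_to hmaps _
  have hsum := Finset.sum_le_sum key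
  rw [hfib1, Finset.sum_add_distrib, ← Finset.mul_sum, hfib2] at hsum
  linarith
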